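/- For n, m ≥ 3 and l ≥ 1, the induced matching numbers of dumbbell graphs satisfy ν(C_n·P_{l+3}·C_m) = ν(C_n·P_l·C_m) + 1. -/

import Mathlib

open SimpleGraph

/-- `M` is an induced matching of the simple graph `G`: every element of `M` is an
edge of `G`, and no edge of `G` joins (endpoints of) two distinct edges of `M`
(in particular the edges of `M` are pairwise disjoint). -/
def SimpleGraph.IsInducedMatching {V : Type*} (G : SimpleGraph V)
    (M : Finset (Sym2 V)) : Prop :=
  (∀ e ∈ M, e ∈ G.edgeSet) ∧
    ∀ e ∈ M, ∀ f ∈ M, e ≠ f → ∀ u ∈ e, ∀ v ∈ f, ¬ G.Adj u v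

/-- The induced matching number `ν(G)`: the maximum size of an induced matching. -/
noncomputable def SimpleGraph.inducedMatchingNumber {V : Type*} (G : SimpleGraph V) : ℕ :=
  sSup {k : ℕ | ∃ M : Finset (Sym2 V), G.IsInducedMatching M ∧ M.card = k}

/-- The graph obtained from `G` by deleting all vertices outside `A`
(keeping the ambient vertex type, deleted vertices become isolated). -/
def SimpleGraph.restrictTo {V : Type*} (G : SimpleGraph V) (A : Set V) : SimpleGraph V where
  Adj a b := G.Adj a b ∧ a ∈ A ∧ b ∈ A
  symm := ⟨fun a b h => ⟨h.1.symm, h.2.2, h.2.1⟩⟩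
  loopless := ⟨fun a h => G.loopless.irrefl a h.1⟩

/-- `Γ_G(S)`: the set of vertices of `G` at distance exactly one from the set `S`. -/
def SimpleGraph.gammaSet {V : Type*} (G : SimpleGraph V) (S : Set V) : Set V :=
  {v | v ∉ S ∧ ∃ u ∈ S, G.Adj v u}

/-- Label (in `ℕ`) of the `k`-th vertex (0-indexed) of the bridge path:
`z_1 = x_1 = 0` and `z_{k+1} = n + k - 1` for `k ≥ 1`. -/
def zVert (n : ℕ) (k : ℕ) : ℕ := if k = 0 then 0 else n + k - 1

/-- Label of the `j`-th vertex (0-indexed) of the second cycle `C_m`: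
`y_1 = z_l` and `y_{j+1} = n + l - 2 + j` for `j ≥ 1`. -/
def yVert (n l : ℕ) (j : ℕ) : ℕ := if j = 0 then zVert n (l - 1) else n + l - 2 + j

/-- The graph `C_n · P_l` on vertex labels in `ℕ`: a cycle on `0, …, n-1`
together with a path on `l` vertices attached at the vertex `0`. -/
def cyclePathGraph (n l : ℕ) : SimpleGraph ℕ :=
  SimpleGraph.fromRel (fun a b =>
    (∃ i < n, a = i ∧ b = (i + 1) % n) ∨
    (∃ k, k + 1 < l ∧ a = zVert n k ∧ b = zVert n (k + 1)))

/-- The dumbbell graph `C_n · P_l · C_m` on vertex labels in `ℕ`: cycles `C_n` and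
`C_m` joined by a path on `l` vertices, the endpoints of the path being identified
with one vertex of each cycle. Its vertices are `0, …, n + m + l - 3`. -/
def dumbbell (n l m : ℕ) : SimpleGraph ℕ :=
  SimpleGraph.fromRel (fun a b =>
    (∃ i < n, a = i ∧ b = (i + 1) % n) ∨
    (∃ k, k + 1 < l ∧ a = zVert n k ∧ b = zVert n (k + 1)) ∨
    (∃ j < m, a = yVert n l j ∧ b = yVert n l ((j + 1) % m)))

/-- `ξ₃(k) = 1` if `k ≡ 0, 1 (mod 3)`, and `ξ₃(k) = 0` if `k ≡ 2 (mod 3)`. -/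
def xi3 (k : ℕ) : ℕ := if k % 3 = 2 then 0 else 1

namespace DB

def fmap (n v : ℕ) : ℕ := if v < n then v else v + 3

lemma fmap_inj {n a b : ℕ} (h : fmap n a = fmap n b) : a = b := by
  unfold fmap at h; split at h <;> split at h <;> omega

lemma zfact (n k : ℕ) : (k = 0 ∧ zVert n k = 0) ∨ (1 ≤ k ∧ zVert n k = n + k - 1) := by
  unfold zVert; split <;> omega

lemma yfact (n l j : ℕ) (hl : 1 ≤ l) :
    (j = 0 ∧ l = 1 ∧ yVert n l j = 0) ∨ (j = 0 ∧ 2 ≤ l ∧ yVert n l j = n + l - 2) ∨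
    (1 ≤ j ∧ yVert n l j = n + l - 2 + j) := by
  unfold yVert zVert; split
  · split <;> omega
  · omega

lemma ffact (n v : ℕ) : (v < n ∧ fmap n v = v) ∨ (n ≤ v ∧ fmap n v = v + 3) := by
  unfold fmap; split <;> omega

lemma modfact (j m : ℕ) (hm : 0 < m) :
    j < m → ((j + 1 = m ∧ (j + 1) % m = 0) ∨ (j + 1 < m ∧ (j + 1) % m = j + 1)) := by
  intro h
  rcases Nat.lt_or_ge (j+1) m with h'|h'
  · exact Or.inr ⟨h', Nat.mod_eq_of_lt h'⟩
  · have hjm : j + 1 = m := by omega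
    rw [hjm]; exact Or.inl ⟨rfl, Nat.mod_self m⟩

lemma dumbbell_adj {n l m a b : ℕ} :
    (dumbbell n l m).Adj a b ↔ a ≠ b ∧
      ((∃ i < n, a = i ∧ b = (i+1) % n) ∨ (∃ i < n, b = i ∧ a = (i+1) % n) ∨
       (∃ k, k + 1 < l ∧ a = zVert n k ∧ b = zVert n (k+1)) ∨
       (∃ k, k + 1 < l ∧ b = zVert n k ∧ a = zVert n (k+1)) ∨
       (∃ j < m, a = yVert n l j ∧ b = yVert n l ((j+1) % m)) ∨
       (∃ j < m, b = yVert n l j ∧ a = yVert n l ((j+1) % m))) := by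
  rw [dumbbell, SimpleGraph.fromRel_adj]
  constructor
  · rintro ⟨h1, (h|h|h)|(h|h|h)⟩
    exacts [⟨h1, Or.inl h⟩, ⟨h1, Or.inr (Or.inr (Or.inl h))⟩,
      ⟨h1, Or.inr (Or.inr (Or.inr (Or.inr (Or.inl h))))⟩,
      ⟨h1, Or.inr (Or.inl h)⟩, ⟨h1, Or.inr (Or.inr (Or.inr (Or.inl h)))⟩,
      ⟨h1, Or.inr (Or.inr (Or.inr (Or.inr (Or.inr h))))⟩]
  · rintro ⟨h1, h|h|h|h|h|h⟩
    exacts [⟨h1, Or.inl (Or.inl h)⟩, ⟨h1, Or.inr (Or.inl h)⟩,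
      ⟨h1, Or.inl (Or.inr (Or.inl h))⟩, ⟨h1, Or.inr (Or.inr (Or.inl h))⟩,
      ⟨h1, Or.inl (Or.inr (Or.inr h))⟩, ⟨h1, Or.inr (Or.inr (Or.inr h))⟩]

section main
variable {n m l : ℕ}

def ExP (n m l u v : ℕ) : Prop :=
  (u = 0 ∧ v = n) ∨ (u = n ∧ v = 0) ∨
    (l = 1 ∧ ((u = 0 ∧ v = n + m - 2) ∨ (u = n + m - 2 ∧ v = 0)))

lemma bwd (hn : 3 ≤ n) (hm : 3 ≤ m) (hl : 1 ≤ l) {u v : ℕ}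
    (h : (dumbbell n (l+3) m).Adj (fmap n u) (fmap n v)) : (dumbbell n l m).Adj u v := by
  rw [dumbbell_adj] at h ⊢
  obtain ⟨hne, hc⟩ := h
  have hu := ffact n u; have hv := ffact n v
  refine ⟨fun h' => hne (by rw [h']), ?_⟩
  rcases hc with ⟨x,hx1,ha,hb⟩|⟨x,hx1,ha,hb⟩|⟨x,hx1,ha,hb⟩|⟨x,hx1,ha,hb⟩|⟨x,hx1,ha,hb⟩|⟨x,hx1,ha,hb⟩
  · have f6 : (x+1) % n < n := Nat.mod_lt _ (by omega)
    exact Or.inl ⟨x, hx1, by omega, by omega⟩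
  · have f6 : (x+1) % n < n := Nat.mod_lt _ (by omega)
    exact Or.inr (Or.inl ⟨x, hx1, by omega, by omega⟩)
  · have f1 := zfact n x; have f2 := zfact n (x+1)
    have f3 := zfact n (x-3); have f4 := zfact n (x-3+1)
    exact Or.inr (Or.inr (Or.inl ⟨x-3, by omega, by omega, by omega⟩))
  · have f1 := zfact n x; have f2 := zfact n (x+1)
    have f3 := zfact n (x-3); have f4 := zfact n (x-3+1)
    exact Or.inr (Or.inr (Or.inr (Or.inl ⟨x-3, by omega, by omega, by omega⟩)))
  · have f1 := yfact n (l+3) x (by omega); have f2 := yfact n (l+3) ((x+1)%m) (by omega)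
    have f3 := yfact n l x hl; have f4 := yfact n l ((x+1)%m) hl
    have f5 := modfact x m (by omega)
    exact Or.inr (Or.inr (Or.inr (Or.inr (Or.inl ⟨x, hx1, by omega, by omega⟩))))
  · have f1 := yfact n (l+3) x (by omega); have f2 := yfact n (l+3) ((x+1)%m) (by omega)
    have f3 := yfact n l x hl; have f4 := yfact n l ((x+1)%m) hl
    have f5 := modfact x m (by omega)
    exact Or.inr (Or.inr (Or.inr (Or.inr (Or.inr ⟨x, hx1, by omega, by omega⟩))))

lemma fwd (hn : 3 ≤ n) (hm : 3 ≤ m) (hl : 1 ≤ l) {u v : ℕ}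
    (h : (dumbbell n l m).Adj u v) (hx : ¬ ExP n m l u v) :
    (dumbbell n (l+3) m).Adj (fmap n u) (fmap n v) := by
  rw [dumbbell_adj] at h ⊢
  obtain ⟨hne, hc⟩ := h
  unfold ExP at hx
  have hu := ffact n u; have hv := ffact n v
  refine ⟨fun h' => hne (fmap_inj h'), ?_⟩
  rcases hc with ⟨x,hx1,ha,hb⟩|⟨x,hx1,ha,hb⟩|⟨x,hx1,ha,hb⟩|⟨x,hx1,ha,hb⟩|⟨x,hx1,ha,hb⟩|⟨x,hx1,ha,hb⟩
  · have f6 : (x+1) % n < n := Nat.mod_lt _ (by omega)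
    exact Or.inl ⟨x, hx1, by omega, by omega⟩
  · have f6 : (x+1) % n < n := Nat.mod_lt _ (by omega)
    exact Or.inr (Or.inl ⟨x, hx1, by omega, by omega⟩)
  · have f1 := zfact n x; have f2 := zfact n (x+1)
    have f3 := zfact n (x+3); have f4 := zfact n (x+3+1)
    exact Or.inr (Or.inr (Or.inl ⟨x+3, by omega, by omega, by omega⟩))
  · have f1 := zfact n x; have f2 := zfact n (x+1)
    have f3 := zfact n (x+3); have f4 := zfact n (x+3+1)
    exact Or.inr (Or.inr (Or.inr (Or.inl ⟨x+3, by omega, by omega, by omega⟩)))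
  · have f1 := yfact n (l+3) x (by omega); have f2 := yfact n (l+3) ((x+1)%m) (by omega)
    have f3 := yfact n l x hl; have f4 := yfact n l ((x+1)%m) hl
    have f5 := modfact x m (by omega)
    exact Or.inr (Or.inr (Or.inr (Or.inr (Or.inl ⟨x, hx1, by omega, by omega⟩))))
  · have f1 := yfact n (l+3) x (by omega); have f2 := yfact n (l+3) ((x+1)%m) (by omega)
    have f3 := yfact n l x hl; have f4 := yfact n l ((x+1)%m) hl
    have f5 := modfact x m (by omega)
    exact Or.inr (Or.inr (Or.inr (Or.inr (Or.inr ⟨x, hx1, by omega, by omega⟩))))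

end main
section nbrs
variable {n m l : ℕ}

lemma L1 (hn : 3 ≤ n) (hm : 3 ≤ m) (hl : 1 ≤ l) {w : ℕ}
    (h : (dumbbell n (l+3) m).Adj n w) : w = 0 ∨ w = n + 1 := by
  rw [dumbbell_adj] at h
  obtain ⟨-, hc⟩ := h
  rcases hc with ⟨x,hx1,ha,hb⟩|⟨x,hx1,ha,hb⟩|⟨x,hx1,ha,hb⟩|⟨x,hx1,ha,hb⟩|⟨x,hx1,ha,hb⟩|⟨x,hx1,ha,hb⟩ <;>
  · first
    | (have f6 : (x+1) % n < n := Nat.mod_lt _ (by omega); omega)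
    | (have f1 := zfact n x; have f2 := zfact n (x+1); omega)
    | (have f1 := yfact n (l+3) x (by omega); have f2 := yfact n (l+3) ((x+1)%m) (by omega);
       have f5 := modfact x m (by omega); omega)

lemma L2 (hn : 3 ≤ n) (hm : 3 ≤ m) (hl : 1 ≤ l) {w : ℕ}
    (h : (dumbbell n (l+3) m).Adj (n+1) w) : w = n ∨ w = n + 2 := by
  rw [dumbbell_adj] at h
  obtain ⟨-, hc⟩ := h
  rcases hc with ⟨x,hx1,ha,hb⟩|⟨x,hx1,ha,hb⟩|⟨x,hx1,ha,hb⟩|⟨x,hx1,ha,hb⟩|⟨x,hx1,ha,hb⟩|⟨x,hx1,ha,hb⟩ <;>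
  · first
    | (have f6 : (x+1) % n < n := Nat.mod_lt _ (by omega); omega)
    | (have f1 := zfact n x; have f2 := zfact n (x+1); omega)
    | (have f1 := yfact n (l+3) x (by omega); have f2 := yfact n (l+3) ((x+1)%m) (by omega);
       have f5 := modfact x m (by omega); omega)

lemma L3 (hn : 3 ≤ n) (hm : 3 ≤ m) (hl : 1 ≤ l) {w : ℕ}
    (h : (dumbbell n (l+3) m).Adj (n+2) w) : w = n+1 ∨ w = n + 3 ∨ (l = 1 ∧ w = n + m + 1) := by
  rw [dumbbell_adj] at h
  obtain ⟨-, hc⟩ := h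
  rcases hc with ⟨x,hx1,ha,hb⟩|⟨x,hx1,ha,hb⟩|⟨x,hx1,ha,hb⟩|⟨x,hx1,ha,hb⟩|⟨x,hx1,ha,hb⟩|⟨x,hx1,ha,hb⟩ <;>
  · first
    | (have f6 : (x+1) % n < n := Nat.mod_lt _ (by omega); omega)
    | (have f1 := zfact n x; have f2 := zfact n (x+1); omega)
    | (have f1 := yfact n (l+3) x (by omega); have f2 := yfact n (l+3) ((x+1)%m) (by omega);
       have f5 := modfact x m (by omega); omega)

lemma L4 (hn : 3 ≤ n) (hm : 3 ≤ m) (hl : 1 ≤ l) {w : ℕ}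
    (h : (dumbbell n (l+3) m).Adj (n+3) w) : w = n+2 ∨ w = n + 4 ∨ (l = 2 ∧ w = n + m + 2) := by
  rw [dumbbell_adj] at h
  obtain ⟨-, hc⟩ := h
  rcases hc with ⟨x,hx1,ha,hb⟩|⟨x,hx1,ha,hb⟩|⟨x,hx1,ha,hb⟩|⟨x,hx1,ha,hb⟩|⟨x,hx1,ha,hb⟩|⟨x,hx1,ha,hb⟩ <;>
  · first
    | (have f6 : (x+1) % n < n := Nat.mod_lt _ (by omega); omega)
    | (have f1 := zfact n x; have f2 := zfact n (x+1); omega)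
    | (have f1 := yfact n (l+3) x (by omega); have f2 := yfact n (l+3) ((x+1)%m) (by omega);
       have f5 := modfact x m (by omega); omega)

lemma L5 (hn : 3 ≤ n) (hm : 3 ≤ m) (hl1 : l = 1) {w : ℕ}
    (h : (dumbbell n (l+3) m).Adj (n+m+1) w) : w = n + m ∨ w = n + 2 := by
  subst hl1
  rw [dumbbell_adj] at h
  obtain ⟨-, hc⟩ := h
  rcases hc with ⟨x,hx1,ha,hb⟩|⟨x,hx1,ha,hb⟩|⟨x,hx1,ha,hb⟩|⟨x,hx1,ha,hb⟩|⟨x,hx1,ha,hb⟩|⟨x,hx1,ha,hb⟩ <;>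
  · first
    | (have f6 : (x+1) % n < n := Nat.mod_lt _ (by omega); omega)
    | (have f1 := zfact n x; have f2 := zfact n (x+1); omega)
    | (have f1 := yfact n (1+3) x (by omega); have f2 := yfact n (1+3) ((x+1)%m) (by omega);
       have f5 := modfact x m (by omega); omega)

lemma L0 (hn : 3 ≤ n) (hm : 3 ≤ m) (hl : 1 ≤ l) {w : ℕ}
    (h : (dumbbell n (l+3) m).Adj 0 w) : w = 1 ∨ w = n - 1 ∨ w = n := by
  rw [dumbbell_adj] at h
  obtain ⟨hne, hc⟩ := h
  rcases hc with ⟨x,hx1,ha,hb⟩|⟨x,hx1,ha,hb⟩|⟨x,hx1,ha,hb⟩|⟨x,hx1,ha,hb⟩|⟨x,hx1,ha,hb⟩|⟨x,hx1,ha,hb⟩ <;>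
  · first
    | (have f5 := modfact x n (by omega); have f6 : (x+1) % n < n := Nat.mod_lt _ (by omega); omega)
    | (have f1 := zfact n x; have f2 := zfact n (x+1); omega)
    | (have f1 := yfact n (l+3) x (by omega); have f2 := yfact n (l+3) ((x+1)%m) (by omega);
       have f5 := modfact x m (by omega); omega)

-- concrete edges of the big graph G' = dumbbell n (l+3) m
lemma E'01 (hn : 3 ≤ n) (hm : 3 ≤ m) (hl : 1 ≤ l) : (dumbbell n (l+3) m).Adj 0 n := by
  rw [dumbbell_adj]
  have f1 := zfact n 0; have f2 := zfact n (0+1)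
  exact ⟨by omega, Or.inr (Or.inr (Or.inl ⟨0, by omega, by omega, by omega⟩))⟩

lemma E'12 (hn : 3 ≤ n) (hm : 3 ≤ m) (hl : 1 ≤ l) : (dumbbell n (l+3) m).Adj n (n+1) := by
  rw [dumbbell_adj]
  have f1 := zfact n 1; have f2 := zfact n (1+1)
  exact ⟨by omega, Or.inr (Or.inr (Or.inl ⟨1, by omega, by omega, by omega⟩))⟩

lemma E'23 (hn : 3 ≤ n) (hm : 3 ≤ m) (hl : 1 ≤ l) : (dumbbell n (l+3) m).Adj (n+1) (n+2) := by
  rw [dumbbell_adj]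
  have f1 := zfact n 2; have f2 := zfact n (2+1)
  exact ⟨by omega, Or.inr (Or.inr (Or.inl ⟨2, by omega, by omega, by omega⟩))⟩

lemma E'34 (hn : 3 ≤ n) (hm : 3 ≤ m) (hl : 1 ≤ l) : (dumbbell n (l+3) m).Adj (n+2) (n+3) := by
  rw [dumbbell_adj]
  rcases Nat.lt_or_ge l 2 with h2 | h2
  · -- l = 1 : cycle-2 edge y'_0 y'_1
    have f1 := yfact n (l+3) 0 (by omega); have f2 := yfact n (l+3) ((0+1)%m) (by omega)
    have f5 := modfact 0 m (by omega)
    exact ⟨by omega, Or.inr (Or.inr (Or.inr (Or.inr (Or.inl ⟨0, by omega, by omega, by omega⟩))))⟩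
  · have f1 := zfact n 3; have f2 := zfact n (3+1)
    exact ⟨by omega, Or.inr (Or.inr (Or.inl ⟨3, by omega, by omega, by omega⟩))⟩

lemma E'5 (hn : 3 ≤ n) (hm : 3 ≤ m) (hl1 : l = 1) : (dumbbell n (l+3) m).Adj (n+2) (n+m+1) := by
  rw [dumbbell_adj]
  have f1 := yfact n (l+3) (m-1) (by omega); have f2 := yfact n (l+3) ((m-1+1)%m) (by omega)
  have f5 := modfact (m-1) m (by omega)
  exact ⟨by omega, Or.inr (Or.inr (Or.inr (Or.inr (Or.inr ⟨m-1, by omega, by omega, by omega⟩))))⟩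

-- concrete edges of the small graph G = dumbbell n l m
lemma EG01 (hn : 3 ≤ n) (hm : 3 ≤ m) (hl : 1 ≤ l) : (dumbbell n l m).Adj 0 n := by
  rw [dumbbell_adj]
  rcases Nat.lt_or_ge l 2 with h2 | h2
  · have f1 := yfact n l 0 (by omega); have f2 := yfact n l ((0+1)%m) (by omega)
    have f5 := modfact 0 m (by omega)
    exact ⟨by omega, Or.inr (Or.inr (Or.inr (Or.inr (Or.inl ⟨0, by omega, by omega, by omega⟩))))⟩
  · have f1 := zfact n 0; have f2 := zfact n (0+1)
    exact ⟨by omega, Or.inr (Or.inr (Or.inl ⟨0, by omega, by omega, by omega⟩))⟩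

lemma EG0ym (hn : 3 ≤ n) (hm : 3 ≤ m) (hl1 : l = 1) : (dumbbell n l m).Adj 0 (n+m-2) := by
  rw [dumbbell_adj]
  have f1 := yfact n l (m-1) (by omega); have f2 := yfact n l ((m-1+1)%m) (by omega)
  have f5 := modfact (m-1) m (by omega)
  exact ⟨by omega, Or.inr (Or.inr (Or.inr (Or.inr (Or.inr ⟨m-1, by omega, by omega, by omega⟩))))⟩

lemma EGn1 (hn : 3 ≤ n) (hm : 3 ≤ m) (hl : 1 ≤ l) : (dumbbell n l m).Adj n (n+1) := by
  rw [dumbbell_adj]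
  rcases Nat.lt_or_ge l 2 with h2 | h2
  · -- l = 1 : y_1 y_2 edge
    have f1 := yfact n l 1 (by omega); have f2 := yfact n l ((1+1)%m) (by omega)
    have f5 := modfact 1 m (by omega)
    exact ⟨by omega, Or.inr (Or.inr (Or.inr (Or.inr (Or.inl ⟨1, by omega, by omega, by omega⟩))))⟩
  · rcases Nat.lt_or_ge l 3 with h3 | h3
    · -- l = 2 : y_0 y_1 edge
      have f1 := yfact n l 0 (by omega); have f2 := yfact n l ((0+1)%m) (by omega)
      have f5 := modfact 0 m (by omega)
      exact ⟨by omega, Or.inr (Or.inr (Or.inr (Or.inr (Or.inl ⟨0, by omega, by omega, by omega⟩))))⟩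
    · have f1 := zfact n 1; have f2 := zfact n (1+1)
      exact ⟨by omega, Or.inr (Or.inr (Or.inl ⟨1, by omega, by omega, by omega⟩))⟩

lemma EGymn (hn : 3 ≤ n) (hm : 3 ≤ m) (hl2 : l = 2) : (dumbbell n l m).Adj (n+m-1) n := by
  rw [dumbbell_adj]
  have f1 := yfact n l (m-1) (by omega); have f2 := yfact n l ((m-1+1)%m) (by omega)
  have f5 := modfact (m-1) m (by omega)
  exact ⟨by omega, Or.inr (Or.inr (Or.inr (Or.inr (Or.inl ⟨m-1, by omega, by omega, by omega⟩))))⟩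

lemma EGym1ym (hn : 3 ≤ n) (hm : 3 ≤ m) (hl1 : l = 1) : (dumbbell n l m).Adj (n+m-3) (n+m-2) := by
  rw [dumbbell_adj]
  have f1 := yfact n l (m-2) (by omega); have f2 := yfact n l ((m-2+1)%m) (by omega)
  have f5 := modfact (m-2) m (by omega)
  exact ⟨by omega, Or.inr (Or.inr (Or.inr (Or.inr (Or.inl ⟨m-2, by omega, by omega, by omega⟩))))⟩

end nbrs
section matchings
variable {V : Type*} {G : SimpleGraph V} {M N : Finset (Sym2 V)}

lemma sym2_cases (e : Sym2 ℕ) : ∃ a b : ℕ, e = s(a,b) := by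
  induction e using Sym2.ind with | _ a b => exact ⟨a, b, rfl⟩

lemma empty_matching (G : SimpleGraph V) : G.IsInducedMatching ∅ :=
  ⟨by simp, by simp⟩

lemma subset_matching (h : G.IsInducedMatching M) (hs : N ⊆ M) : G.IsInducedMatching N :=
  ⟨fun e he => h.1 e (hs he), fun e he f hf => h.2 e (hs he) f (hs hf)⟩

lemma eq_of_mem_mem (h : G.IsInducedMatching M) {e e' : Sym2 V} {v : V}
    (he : e ∈ M) (he' : e' ∈ M) (hv : v ∈ e) (hv' : v ∈ e') : e = e' := by
  by_contra hne
  have hsp := Sym2.other_spec hv'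
  have hadj : G.Adj v (Sym2.Mem.other hv') := G.mem_edgeSet.mp (by rw [hsp]; exact h.1 e' he')
  exact h.2 e he e' he' hne v hv _ (Sym2.other_mem hv') hadj

lemma insert_matching [DecidableEq (Sym2 V)] (h : G.IsInducedMatching M) {a b : V} (he : G.Adj a b)
    (hcond : ∀ u ∈ (s(a,b) : Sym2 V), ∀ e' ∈ M, ∀ w ∈ e', ¬ G.Adj u w) :
    G.IsInducedMatching (insert s(a,b) M) ∧ (insert s(a,b) M).card = M.card + 1 := by
  have hem : s(a,b) ∉ M := fun hmem =>
    hcond a (Sym2.mem_mk_left a b) _ hmem b (Sym2.mem_mk_right a b) he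
  refine ⟨⟨?_, ?_⟩, by rw [Finset.card_insert_of_notMem hem]⟩
  · intro e' he'; rcases Finset.mem_insert.mp he' with rfl | hh
    · exact G.mem_edgeSet.mpr he
    · exact h.1 e' hh
  · intro e1 h1 e2 h2 hne u hu v hv
    rcases Finset.mem_insert.mp h1 with rfl | h1' <;> rcases Finset.mem_insert.mp h2 with rfl | h2'
    · exact absurd rfl hne
    · exact hcond u hu e2 h2' v hv
    · intro hA; exact hcond v hv e1 h1' u hu hA.symm
    · exact h.2 e1 h1' e2 h2' hne u hu v hv

end matchings

section mapmatch

lemma map_matching {G G' : SimpleGraph ℕ} {M : Finset (Sym2 ℕ)} {φ : ℕ → ℕ}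
    (hinj : Function.Injective φ)
    (h : G.IsInducedMatching M)
    (hedge : ∀ e ∈ M, Sym2.map φ e ∈ G'.edgeSet)
    (hrefl : ∀ a b : ℕ, G'.Adj (φ a) (φ b) → G.Adj a b) :
    G'.IsInducedMatching (M.image (Sym2.map φ)) ∧ (M.image (Sym2.map φ)).card = M.card := by
  refine ⟨⟨?_, ?_⟩, Finset.card_image_of_injective _ (Sym2.map.injective hinj)⟩
  · intro e he; obtain ⟨e₀, he₀, rfl⟩ := Finset.mem_image.mp he; exact hedge e₀ he₀
  · intro e1 h1 e2 h2 hne u hu v hv hA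
    obtain ⟨d1, hd1, rfl⟩ := Finset.mem_image.mp h1
    obtain ⟨d2, hd2, rfl⟩ := Finset.mem_image.mp h2
    obtain ⟨u₀, hu₀, rfl⟩ := Sym2.mem_map.mp hu
    obtain ⟨v₀, hv₀, rfl⟩ := Sym2.mem_map.mp hv
    exact h.2 d1 hd1 d2 hd2 (fun hdd => hne (by rw [hdd])) u₀ hu₀ v₀ hv₀ (hrefl _ _ hA)

end mapmatch

section pull
variable {n m l : ℕ}

def gmap (n v : ℕ) : ℕ := if v < n then v else v - 3

lemma fg {v : ℕ} (hn : 3 ≤ n) (hv : ¬(v = n ∨ v = n+1 ∨ v = n+2)) : fmap n (gmap n v) = v := by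
  unfold fmap gmap; split_ifs <;> omega

lemma fmap0 (hn : 3 ≤ n) : fmap n 0 = 0 := by unfold fmap; split <;> omega
lemma fmapn (hn : 3 ≤ n) : fmap n n = n + 3 := by unfold fmap; split <;> omega
lemma fmapym (hn : 3 ≤ n) (hm : 3 ≤ m) : fmap n (n+m-2) = n+m+1 := by unfold fmap; split <;> omega

lemma pullback (hn : 3 ≤ n) (hm : 3 ≤ m) (hl : 1 ≤ l) {M₁ : Finset (Sym2 ℕ)}
    (h : (dumbbell n (l+3) m).IsInducedMatching M₁)
    (havoid : ∀ e ∈ M₁, ∀ v ∈ e, ¬(v = n ∨ v = n+1 ∨ v = n+2))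
    (hbad1 : ¬((∃ e ∈ M₁, (0:ℕ) ∈ e) ∧ (∃ e ∈ M₁, n+3 ∈ e)))
    (hbad2 : ¬(l = 1 ∧ (∃ e ∈ M₁, (0:ℕ) ∈ e) ∧ (∃ e ∈ M₁, n+m+1 ∈ e))) :
    (dumbbell n l m).IsInducedMatching (M₁.image (Sym2.map (gmap n))) ∧
      (M₁.image (Sym2.map (gmap n))).card = M₁.card := by
  have hfg : ∀ e ∈ M₁, Sym2.map (fmap n) (Sym2.map (gmap n) e) = e := by
    intro e he
    obtain ⟨a, b, rfl⟩ := sym2_cases e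
    rw [Sym2.map_pair_eq, Sym2.map_pair_eq,
      fg hn (havoid _ he a (Sym2.mem_mk_left a b)), fg hn (havoid _ he b (Sym2.mem_mk_right a b))]
  refine ⟨⟨?_, ?_⟩, ?_⟩
  · intro e' he'; obtain ⟨e, he, rfl⟩ := Finset.mem_image.mp he'
    obtain ⟨a, b, rfl⟩ := sym2_cases e
    have hadj : (dumbbell n (l+3) m).Adj a b := (dumbbell n (l+3) m).mem_edgeSet.mp (h.1 _ he)
    rw [Sym2.map_pair_eq]
    refine (dumbbell n l m).mem_edgeSet.mpr (bwd hn hm hl ?_)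
    rw [fg hn (havoid _ he a (Sym2.mem_mk_left a b)), fg hn (havoid _ he b (Sym2.mem_mk_right a b))]
    exact hadj
  · intro e1 h1 e2 h2 hne u hu v hv hA
    obtain ⟨d1, hd1, rfl⟩ := Finset.mem_image.mp h1
    obtain ⟨d2, hd2, rfl⟩ := Finset.mem_image.mp h2
    obtain ⟨a, ha, rfl⟩ := Sym2.mem_map.mp hu
    obtain ⟨b, hb, rfl⟩ := Sym2.mem_map.mp hv
    have hne' : d1 ≠ d2 := fun hh => hne (by rw [hh])
    have hfa := fg hn (havoid _ hd1 a ha)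
    have hfb := fg hn (havoid _ hd2 b hb)
    by_cases hex : ExP n m l (gmap n a) (gmap n b)
    · unfold ExP at hex
      rcases hex with ⟨h0, hn'⟩ | ⟨hn', h0⟩ | ⟨hl1, ⟨h0, hy⟩ | ⟨hy, h0⟩⟩
      · rw [h0] at hfa; rw [hn'] at hfb
        rw [fmap0 hn] at hfa; rw [fmapn hn] at hfb
        exact hbad1 ⟨⟨d1, hd1, hfa ▸ ha⟩, ⟨d2, hd2, hfb ▸ hb⟩⟩
      · rw [hn'] at hfa; rw [h0] at hfb
        rw [fmapn hn] at hfa; rw [fmap0 hn] at hfb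
        exact hbad1 ⟨⟨d2, hd2, hfb ▸ hb⟩, ⟨d1, hd1, hfa ▸ ha⟩⟩
      · rw [h0] at hfa; rw [hy] at hfb
        rw [fmap0 hn] at hfa; rw [fmapym hn hm] at hfb
        exact hbad2 ⟨hl1, ⟨d1, hd1, hfa ▸ ha⟩, ⟨d2, hd2, hfb ▸ hb⟩⟩
      · rw [hy] at hfa; rw [h0] at hfb
        rw [fmapym hn hm] at hfa; rw [fmap0 hn] at hfb
        exact hbad2 ⟨hl1, ⟨d2, hd2, hfb ▸ hb⟩, ⟨d1, hd1, hfa ▸ ha⟩⟩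
    · refine h.2 d1 hd1 d2 hd2 hne' a ha b hb ?_
      rw [← hfa, ← hfb]
      exact fwd hn hm hl hA hex
  · refine Finset.card_image_of_injOn ?_
    intro d1 hd1 d2 hd2 heq
    rw [← hfg d1 (Finset.mem_coe.mp hd1), ← hfg d2 (Finset.mem_coe.mp hd2), heq]

end pull
section nu
variable {n m l : ℕ}

lemma adj_bound (hl : 1 ≤ l) {a b : ℕ} (h : (dumbbell n l m).Adj a b) :
    a < n + l + m ∧ b < n + l + m := by
  rw [dumbbell_adj] at h
  obtain ⟨-, hc⟩ := h
  rcases hc with ⟨x,hx1,ha,hb⟩|⟨x,hx1,ha,hb⟩|⟨x,hx1,ha,hb⟩|⟨x,hx1,ha,hb⟩|⟨x,hx1,ha,hb⟩|⟨x,hx1,ha,hb⟩ <;>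
  · first
    | (have f6 : (x+1) % n < n := Nat.mod_lt _ (by omega); omega)
    | (have f1 := zfact n x; have f2 := zfact n (x+1); omega)
    | (have f1 := yfact n l x hl; have f2 := yfact n l ((x+1)%m) hl;
       have f5 := modfact x m (by omega); have f6 : (x+1) % m < m := Nat.mod_lt _ (by omega); omega)

lemma card_bound (hl : 1 ≤ l) {M : Finset (Sym2 ℕ)}
    (h : (dumbbell n l m).IsInducedMatching M) :
    M.card ≤ (((Finset.range (n+l+m)) ×ˢ (Finset.range (n+l+m))).image
      (fun p : ℕ × ℕ => s(p.1, p.2))).card := by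
  apply Finset.card_le_card
  intro e he
  obtain ⟨a, b, rfl⟩ := sym2_cases e
  have hadj : (dumbbell n l m).Adj a b := (dumbbell n l m).mem_edgeSet.mp (h.1 _ he)
  obtain ⟨ha, hb⟩ := adj_bound hl hadj
  exact Finset.mem_image.mpr ⟨(a, b), Finset.mem_product.mpr
    ⟨Finset.mem_range.mpr ha, Finset.mem_range.mpr hb⟩, rfl⟩

lemma nu_bdd (hl : 1 ≤ l) :
    BddAbove {k : ℕ | ∃ M : Finset (Sym2 ℕ), (dumbbell n l m).IsInducedMatching M ∧ M.card = k} := by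
  refine ⟨(((Finset.range (n+l+m)) ×ˢ (Finset.range (n+l+m))).image
      (fun p : ℕ × ℕ => s(p.1, p.2))).card, ?_⟩
  rintro k ⟨M, hM, rfl⟩
  exact card_bound hl hM

lemma nu_exists (hl : 1 ≤ l) :
    ∃ M : Finset (Sym2 ℕ), (dumbbell n l m).IsInducedMatching M ∧
      M.card = (dumbbell n l m).inducedMatchingNumber := 
by
  have hne : Set.Nonempty {k : ℕ | ∃ M : Finset (Sym2 ℕ),
      (dumbbell n l m).IsInducedMatching M ∧ M.card = k} :=
    ⟨0, ∅, empty_matching _, Finset.card_empty⟩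
  exact Nat.sSup_mem hne (nu_bdd hl)

lemma card_le_nu (hl : 1 ≤ l) {M : Finset (Sym2 ℕ)}
    (h : (dumbbell n l m).IsInducedMatching M) :
    M.card ≤ (dumbbell n l m).inducedMatchingNumber :=
  le_csSup (nu_bdd hl) ⟨M, h, rfl⟩

end nu
section lower
variable {n m l : ℕ}

lemma lower (hn : 3 ≤ n) (hm : 3 ≤ m) (hl : 1 ≤ l) :
    (dumbbell n l m).inducedMatchingNumber + 1 ≤ (dumbbell n (l+3) m).inducedMatchingNumber := by
  classical
  obtain ⟨M, hM, hcard⟩ := nu_exists (n := n) (m := m) hl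
  have hinj : Function.Injective (fmap n) := fun a b h => fmap_inj h
  by_cases hA : ∃ e ∈ M, (0:ℕ) ∈ e ∧ (n ∈ e ∨ (l = 1 ∧ n+m-2 ∈ e))
  · -- Case A : an exceptional edge e is present
    obtain ⟨e, heM, h0e, hrest⟩ := hA
    have hsub : (dumbbell n l m).IsInducedMatching (M.erase e) :=
      subset_matching hM (Finset.erase_subset _ _)
    obtain ⟨hM2, hc2⟩ := map_matching (G := dumbbell n l m) (G' := dumbbell n (l+3) m) hinj hsub
      (by
        intro e' he'
        obtain ⟨a, b, rfl⟩ := sym2_cases e'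
        rw [Sym2.map_pair_eq]
        refine (dumbbell n (l+3) m).mem_edgeSet.mpr (fwd hn hm hl
          ((dumbbell n l m).mem_edgeSet.mp (hM.1 _ (Finset.mem_of_mem_erase he'))) ?_)
        intro hex
        have h0e' : (0:ℕ) ∈ (s(a,b) : Sym2 ℕ) := by
          unfold ExP at hex
          rw [Sym2.mem_iff]
          rcases hex with ⟨h1,h2⟩|⟨h1,h2⟩|⟨-, ⟨h1,h2⟩|⟨h1,h2⟩⟩ <;> omega
        exact (Finset.ne_of_mem_erase he')
          (eq_of_mem_mem hM (Finset.mem_of_mem_erase he') heM h0e' h0e))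
      (fun a b hab => bwd hn hm hl hab)
    set M₂ := (M.erase e).image (Sym2.map (fmap n)) with hM₂def
    -- insert the edge (0, n)
    obtain ⟨hM3, hc3⟩ := insert_matching (a := 0) (b := n) hM2 (E'01 hn hm hl) (by
      intro u hu e' he' w hw hadj
      obtain ⟨d, hd, rfl⟩ := Finset.mem_image.mp he'
      obtain ⟨w₀, hw₀, rfl⟩ := Sym2.mem_map.mp hw
      have hf := ffact n w₀
      rcases Sym2.mem_iff.mp hu with rfl | rfl
      · rw [← fmap0 hn] at hadj
        have hadj' := bwd hn hm hl hadj
        exact hM.2 d (Finset.mem_of_mem_erase hd) e heM (Finset.ne_of_mem_erase hd)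
          w₀ hw₀ 0 h0e hadj'.symm
      · rcases L1 hn hm hl hadj with h1 | h1
        · have hw0 : w₀ = 0 := by omega
          subst hw0
          exact (Finset.ne_of_mem_erase hd)
            (eq_of_mem_mem hM (Finset.mem_of_mem_erase hd) heM hw₀ h0e)
        · omega)
    rcases hrest with hne' | ⟨hl1, hym⟩
    · -- A1 : e contains 0 and n; add edge (n+2, n+3)
      obtain ⟨hM4, hc4⟩ := insert_matching (a := n+2) (b := n+3) hM3 (E'34 hn hm hl) (by
        intro u hu e' he' w hw hadj
        rcases Finset.mem_insert.mp he' with rfl | he₂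
        · have hw' := Sym2.mem_iff.mp hw
          rcases Sym2.mem_iff.mp hu with rfl | rfl
          · have := L3 hn hm hl hadj; omega
          · have := L4 hn hm hl hadj; omega
        · obtain ⟨d, hd, rfl⟩ := Finset.mem_image.mp he₂
          obtain ⟨w₀, hw₀, rfl⟩ := Sym2.mem_map.mp hw
          have hf := ffact n w₀
          rcases Sym2.mem_iff.mp hu with rfl | rfl
          · rcases L3 hn hm hl hadj with h1 | h1 | ⟨hl1, h1⟩
            · omega
            · have hw0 : w₀ = n := by omega
              subst hw0
              exact (Finset.ne_of_mem_erase hd)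
                (eq_of_mem_mem hM (Finset.mem_of_mem_erase hd) heM hw₀ hne')
            · have hw0 : w₀ = n+m-2 := by omega
              subst hw0
              exact hM.2 d (Finset.mem_of_mem_erase hd) e heM (Finset.ne_of_mem_erase hd)
                _ hw₀ 0 h0e (EG0ym hn hm hl1).symm
          · rcases L4 hn hm hl hadj with h1 | h1 | ⟨hl2, h1⟩
            · omega
            · have hw0 : w₀ = n+1 := by omega
              subst hw0
              exact hM.2 d (Finset.mem_of_mem_erase hd) e heM (Finset.ne_of_mem_erase hd)
                _ hw₀ n hne' (EGn1 hn hm hl).symm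
            · have hw0 : w₀ = n+m-1 := by omega
              subst hw0
              exact hM.2 d (Finset.mem_of_mem_erase hd) e heM (Finset.ne_of_mem_erase hd)
                _ hw₀ n hne' (EGymn hn hm hl2))
      have hMc : 1 ≤ M.card := Finset.card_pos.mpr ⟨e, heM⟩
      have hfin : ((insert s(n+2,n+3) (insert s(0,n) M₂)).card) =
          (dumbbell n l m).inducedMatchingNumber + 1 := by
        rw [hc4, hc3, hc2, Finset.card_erase_of_mem heM]; omega
      calc (dumbbell n l m).inducedMatchingNumber + 1 = _ := hfin.symm
        _ ≤ _ := card_le_nu (by omega) hM4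
    · -- A2 : l = 1 and e contains 0 and n+m-2 ; add edge (n+2, n+m+1)
      obtain ⟨hM4, hc4⟩ := insert_matching (a := n+2) (b := n+m+1) hM3 (E'5 hn hm hl1) (by
        intro u hu e' he' w hw hadj
        rcases Finset.mem_insert.mp he' with rfl | he₂
        · have hw' := Sym2.mem_iff.mp hw
          rcases Sym2.mem_iff.mp hu with rfl | rfl
          · have := L3 hn hm hl hadj; omega
          · have := L5 hn hm hl1 hadj; omega
        · obtain ⟨d, hd, rfl⟩ := Finset.mem_image.mp he₂
          obtain ⟨w₀, hw₀, rfl⟩ := Sym2.mem_map.mp hw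
          have hf := ffact n w₀
          rcases Sym2.mem_iff.mp hu with rfl | rfl
          · rcases L3 hn hm hl hadj with h1 | h1 | ⟨hl1', h1⟩
            · omega
            · have hw0 : w₀ = n := by omega
              subst hw0
              exact hM.2 d (Finset.mem_of_mem_erase hd) e heM (Finset.ne_of_mem_erase hd)
                _ hw₀ 0 h0e (EG01 hn hm hl).symm
            · have hw0 : w₀ = n+m-2 := by omega
              subst hw0
              exact (Finset.ne_of_mem_erase hd)
                (eq_of_mem_mem hM (Finset.mem_of_mem_erase hd) heM hw₀ hym)
          · rcases L5 hn hm hl1 hadj with h1 | h1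
            · have hw0 : w₀ = n+m-3 := by omega
              subst hw0
              exact hM.2 d (Finset.mem_of_mem_erase hd) e heM (Finset.ne_of_mem_erase hd)
                _ hw₀ (n+m-2) hym (EGym1ym hn hm hl1)
            · omega)
      have hMc : 1 ≤ M.card := Finset.card_pos.mpr ⟨e, heM⟩
      have hfin : ((insert s(n+2,n+m+1) (insert s(0,n) M₂)).card) =
          (dumbbell n l m).inducedMatchingNumber + 1 := by
        rw [hc4, hc3, hc2, Finset.card_erase_of_mem heM]; omega
      calc (dumbbell n l m).inducedMatchingNumber + 1 = _ := hfin.symm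
        _ ≤ _ := card_le_nu (by omega) hM4
  · -- Cases B and C : no exceptional edge
    obtain ⟨hM1, hc1⟩ := map_matching (G := dumbbell n l m) (G' := dumbbell n (l+3) m) hinj hM
      (by
        intro e' he'
        obtain ⟨a, b, rfl⟩ := sym2_cases e'
        rw [Sym2.map_pair_eq]
        refine (dumbbell n (l+3) m).mem_edgeSet.mpr (fwd hn hm hl
          ((dumbbell n l m).mem_edgeSet.mp (hM.1 _ he')) ?_)
        intro hex
        refine hA ⟨s(a,b), he', ?_, ?_⟩
        · unfold ExP at hex
          rw [Sym2.mem_iff]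
          rcases hex with ⟨h1,h2⟩|⟨h1,h2⟩|⟨-, ⟨h1,h2⟩|⟨h1,h2⟩⟩ <;> omega
        · unfold ExP at hex
          rcases hex with ⟨h1,h2⟩|⟨h1,h2⟩|⟨hl1, ⟨h1,h2⟩|⟨h1,h2⟩⟩
          · exact Or.inl (by rw [Sym2.mem_iff]; omega)
          · exact Or.inl (by rw [Sym2.mem_iff]; omega)
          · exact Or.inr ⟨hl1, by rw [Sym2.mem_iff]; omega⟩
          · exact Or.inr ⟨hl1, by rw [Sym2.mem_iff]; omega⟩)
      (fun a b hab => bwd hn hm hl hab)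
    set M₁ := M.image (Sym2.map (fmap n)) with hM₁def
    by_cases hB : ∃ e₀ ∈ M, (0:ℕ) ∈ e₀
    · -- Case C : 0 is covered (by a non-exceptional edge); add (n+1, n+2)
      obtain ⟨e₀, he₀, h00⟩ := hB
      obtain ⟨hM4, hc4⟩ := insert_matching (a := n+1) (b := n+2) hM1 (E'23 hn hm hl) (by
        intro u hu e' he' w hw hadj
        obtain ⟨d, hd, rfl⟩ := Finset.mem_image.mp he'
        obtain ⟨w₀, hw₀, rfl⟩ := Sym2.mem_map.mp hw
        have hf := ffact n w₀
        rcases Sym2.mem_iff.mp hu with rfl | rfl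
        · have := L2 hn hm hl hadj; omega
        · rcases L3 hn hm hl hadj with h1 | h1 | ⟨hl1, h1⟩
          · omega
          · have hw0 : w₀ = n := by omega
            subst hw0
            by_cases hde : e₀ = d
            · subst hde
              exact hA ⟨e₀, he₀, h00, Or.inl hw₀⟩
            · exact hM.2 e₀ he₀ d hd hde 0 h00 _ hw₀ (EG01 hn hm hl)
          · have hw0 : w₀ = n+m-2 := by omega
            subst hw0
            by_cases hde : e₀ = d
            · subst hde
              exact hA ⟨e₀, he₀, h00, Or.inr ⟨hl1, hw₀⟩⟩
            · exact hM.2 e₀ he₀ d hd hde 0 h00 _ hw₀ (EG0ym hn hm hl1))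
      have hfin : ((insert s(n+1,n+2) M₁).card) =
          (dumbbell n l m).inducedMatchingNumber + 1 := by
        rw [hc4, hc1, hcard]
      calc (dumbbell n l m).inducedMatchingNumber + 1 = _ := hfin.symm
        _ ≤ _ := card_le_nu (by omega) hM4
    · -- Case B : 0 is uncovered; add (n, n+1)
      obtain ⟨hM4, hc4⟩ := insert_matching (a := n) (b := n+1) hM1 (E'12 hn hm hl) (by
        intro u hu e' he' w hw hadj
        obtain ⟨d, hd, rfl⟩ := Finset.mem_image.mp he'
        obtain ⟨w₀, hw₀, rfl⟩ := Sym2.mem_map.mp hw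
        have hf := ffact n w₀
        rcases Sym2.mem_iff.mp hu with rfl | rfl
        · rcases L1 hn hm hl hadj with h1 | h1
          · have hw0 : w₀ = 0 := by omega
            subst hw0
            exact hB ⟨d, hd, hw₀⟩
          · omega
        · have := L2 hn hm hl hadj; omega)
      have hfin : ((insert s(n,n+1) M₁).card) =
          (dumbbell n l m).inducedMatchingNumber + 1 := by
        rw [hc4, hc1, hcard]
      calc (dumbbell n l m).inducedMatchingNumber + 1 = _ := hfin.symm
        _ ≤ _ := card_le_nu (by omega) hM4

end lower
section upper
variable {n m l : ℕ}

lemma upper (hn : 3 ≤ n) (hm : 3 ≤ m) (hl : 1 ≤ l) :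
    (dumbbell n (l+3) m).inducedMatchingNumber ≤ (dumbbell n l m).inducedMatchingNumber + 1 := by
  classical
  obtain ⟨M', hM', hcard'⟩ := nu_exists (n := n) (m := m) (l := l+3) (by omega)
  suffices h : ∃ N : Finset (Sym2 ℕ), (dumbbell n l m).IsInducedMatching N ∧ M'.card ≤ N.card + 1 by
    obtain ⟨N, hN, hle⟩ := h
    have := card_le_nu hl hN
    omega
  by_cases hU1 : ∃ e ∈ M', (0:ℕ) ∈ e ∧ n ∈ e
  · obtain ⟨e1, he1, h01, hn1⟩ := hU1
    by_cases hU2 : ∃ e ∈ M', (n+2:ℕ) ∈ e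
    · -- U-a-i : both (0,n) and an edge at n+2 present
      obtain ⟨e2, he2, h22⟩ := hU2
      have hne12 : e1 ≠ e2 := by
        intro h; subst h
        obtain ⟨a, b, hab⟩ := sym2_cases e1
        rw [hab, Sym2.mem_iff] at h01 hn1 h22
        omega
      have hx : Sym2.Mem.other h22 = n+3 ∨ (l = 1 ∧ Sym2.Mem.other h22 = n+m+1) := by
        have hsp := Sym2.other_spec h22
        have hadj2 : (dumbbell n (l+3) m).Adj (n+2) (Sym2.Mem.other h22) :=
          (dumbbell n (l+3) m).mem_edgeSet.mp (by rw [hsp]; exact hM'.1 e2 he2)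
        rcases L3 hn hm hl hadj2 with h1 | h1 | ⟨hl1, h1⟩
        · exfalso
          exact hM'.2 e1 he1 e2 he2 hne12 n hn1 _ (Sym2.other_mem h22)
            (by rw [h1]; exact E'12 hn hm hl)
        · exact Or.inl h1
        · exact Or.inr ⟨hl1, h1⟩
      set rest := (M'.erase e1).erase e2 with hrestdef
      have hrsub : rest ⊆ M' := (Finset.erase_subset _ _).trans (Finset.erase_subset _ _)
      have hrsubM : (dumbbell n (l+3) m).IsInducedMatching rest := subset_matching hM' hrsub
      have hrne2 : ∀ e' ∈ rest, e' ≠ e2 := fun e' he' => Finset.ne_of_mem_erase he'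
      have hrne1 : ∀ e' ∈ rest, e' ≠ e1 :=
        fun e' he' => Finset.ne_of_mem_erase (Finset.mem_of_mem_erase he')
      have havoid : ∀ e' ∈ rest, ∀ v ∈ e', ¬(v = n ∨ v = n+1 ∨ v = n+2) := by
        intro e' he' v hv hS
        rcases hS with rfl | rfl | rfl
        · exact hrne1 e' he' (eq_of_mem_mem hM' (hrsub he') he1 hv hn1)
        · exact hM'.2 e' (hrsub he') e1 he1 (hrne1 e' he') _ hv n hn1 (E'12 hn hm hl).symm
        · exact hrne2 e' he' (eq_of_mem_mem hM' (hrsub he') he2 hv h22)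
      have hb0 : ∀ e' ∈ rest, (0:ℕ) ∉ e' :=
        fun e' he' h0 => hrne1 e' he' (eq_of_mem_mem hM' (hrsub he') he1 h0 h01)
      obtain ⟨hpull, hpcard⟩ := pullback hn hm hl hrsubM havoid
        (by rintro ⟨⟨e', he', h0'⟩, -⟩; exact hb0 e' he' h0')
        (by rintro ⟨-, ⟨e', he', h0'⟩, -⟩; exact hb0 e' he' h0')
      have hcard2 : 1 < M'.card := Finset.one_lt_card.mpr ⟨e1, he1, e2, he2, hne12⟩
      have hrcard : rest.card = M'.card - 2 := by
        rw [hrestdef, Finset.card_erase_of_mem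
          (Finset.mem_erase.mpr ⟨fun h => hne12 h.symm, he2⟩), Finset.card_erase_of_mem he1]
        omega
      rcases hx with hx3 | ⟨hl1, hxm⟩
      · have hx2 : (n+3:ℕ) ∈ e2 := by rw [← hx3]; exact Sym2.other_mem h22
        obtain ⟨hN, hNc⟩ := insert_matching (a := 0) (b := n) hpull (EG01 hn hm hl) (by
          intro u hu e' he' w hw hadj
          obtain ⟨d, hd, rfl⟩ := Finset.mem_image.mp he'
          obtain ⟨a, ha, rfl⟩ := Sym2.mem_map.mp hw
          have hfa := fg hn (havoid d hd a ha)
          have hu' := Sym2.mem_iff.mp hu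
          by_cases hex : ExP n m l u (gmap n a)
          · unfold ExP at hex
            rcases hex with ⟨h1,h2⟩|⟨h1,h2⟩|⟨hl1', ⟨h1,h2⟩|⟨h1,h2⟩⟩
            · have ha3 : a = n+3 := by rw [← hfa, h2, fmapn hn]
              exact hM'.2 d (hrsub hd) e2 he2 (hrne2 d hd) a ha (n+2) h22
                (by rw [ha3]; exact (E'34 hn hm hl).symm)
            · have ha0 : a = 0 := by rw [← hfa, h2, fmap0 hn]
              exact hb0 d hd (ha0 ▸ ha)
            · have ham : a = n+m+1 := by rw [← hfa, h2, fmapym hn hm]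
              exact hM'.2 d (hrsub hd) e2 he2 (hrne2 d hd) a ha (n+2) h22
                (by rw [ham]; exact (E'5 hn hm hl1').symm)
            · omega
          · have hadj' := fwd hn hm hl hadj hex
            rw [hfa] at hadj'
            rcases hu' with rfl | rfl
            · rw [fmap0 hn] at hadj'
              exact hM'.2 d (hrsub hd) e1 he1 (hrne1 d hd) a ha 0 h01 hadj'.symm
            · rw [fmapn hn] at hadj'
              exact hM'.2 d (hrsub hd) e2 he2 (hrne2 d hd) a ha _ hx2 hadj'.symm)
        exact ⟨_, hN, by rw [hNc, hpcard, hrcard]; omega⟩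
      · have hx2 : (n+m+1:ℕ) ∈ e2 := by rw [← hxm]; exact Sym2.other_mem h22
        obtain ⟨hN, hNc⟩ := insert_matching (a := 0) (b := n+m-2) hpull (EG0ym hn hm hl1) (by
          intro u hu e' he' w hw hadj
          obtain ⟨d, hd, rfl⟩ := Finset.mem_image.mp he'
          obtain ⟨a, ha, rfl⟩ := Sym2.mem_map.mp hw
          have hfa := fg hn (havoid d hd a ha)
          have hu' := Sym2.mem_iff.mp hu
          by_cases hex : ExP n m l u (gmap n a)
          · unfold ExP at hex
            rcases hex with ⟨h1,h2⟩|⟨h1,h2⟩|⟨hl1', ⟨h1,h2⟩|⟨h1,h2⟩⟩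
            · have ha3 : a = n+3 := by rw [← hfa, h2, fmapn hn]
              exact hM'.2 d (hrsub hd) e2 he2 (hrne2 d hd) a ha (n+2) h22
                (by rw [ha3]; exact (E'34 hn hm hl).symm)
            · omega
            · have ham : a = n+m+1 := by rw [← hfa, h2, fmapym hn hm]
              exact hrne2 d hd (eq_of_mem_mem hM' (hrsub hd) he2 (ham ▸ ha) hx2)
            · have ha0 : a = 0 := by rw [← hfa, h2, fmap0 hn]
              exact hb0 d hd (ha0 ▸ ha)
          · have hadj' := fwd hn hm hl hadj hex
            rw [hfa] at hadj'
            rcases hu' with rfl | rfl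
            · rw [fmap0 hn] at hadj'
              exact hM'.2 d (hrsub hd) e1 he1 (hrne1 d hd) a ha 0 h01 hadj'.symm
            · rw [fmapym hn hm] at hadj'
              exact hM'.2 d (hrsub hd) e2 he2 (hrne2 d hd) a ha _ hx2 hadj'.symm)
        exact ⟨_, hN, by rw [hNc, hpcard, hrcard]; omega⟩
    · -- U-a-ii : edge (0,n) present, nothing at n+2
      set rest := M'.erase e1 with hrestdef
      have hrsub : rest ⊆ M' := Finset.erase_subset _ _
      have hrne1 : ∀ e' ∈ rest, e' ≠ e1 := fun e' he' => Finset.ne_of_mem_erase he'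
      have havoid : ∀ e' ∈ rest, ∀ v ∈ e', ¬(v = n ∨ v = n+1 ∨ v = n+2) := by
        intro e' he' v hv hS
        rcases hS with rfl | rfl | rfl
        · exact hrne1 e' he' (eq_of_mem_mem hM' (hrsub he') he1 hv hn1)
        · exact hM'.2 e' (hrsub he') e1 he1 (hrne1 e' he') _ hv n hn1 (E'12 hn hm hl).symm
        · exact hU2 ⟨e', hrsub he', hv⟩
      have hb0 : ∀ e' ∈ rest, (0:ℕ) ∉ e' :=
        fun e' he' h0 => hrne1 e' he' (eq_of_mem_mem hM' (hrsub he') he1 h0 h01)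
      obtain ⟨hpull, hpcard⟩ := pullback hn hm hl (subset_matching hM' hrsub) havoid
        (by rintro ⟨⟨e', he', h0'⟩, -⟩; exact hb0 e' he' h0')
        (by rintro ⟨-, ⟨e', he', h0'⟩, -⟩; exact hb0 e' he' h0')
      have hcard1 : 1 ≤ M'.card := Finset.card_pos.mpr ⟨e1, he1⟩
      refine ⟨_, hpull, ?_⟩
      rw [hpcard, hrestdef, Finset.card_erase_of_mem he1]
      omega
  · by_cases hT : ∃ e ∈ M', ∃ v, v ∈ e ∧ (v = n ∨ v = n+1 ∨ v = n+2)
    · -- U-b-i : exactly one edge touches {n, n+1, n+2}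
      obtain ⟨e, heM, v, hve, hvS⟩ := hT
      have hshape : ∀ d ∈ M', ∀ w ∈ d, (w = n ∨ w = n+1 ∨ w = n+2) →
          ((n+1:ℕ) ∈ d) ∨ ((n+2:ℕ) ∈ d) := by
        intro d hd w hw hwS
        have hsp := Sym2.other_spec hw
        have hadjw : (dumbbell n (l+3) m).Adj w (Sym2.Mem.other hw) :=
          (dumbbell n (l+3) m).mem_edgeSet.mp (by rw [hsp]; exact hM'.1 d hd)
        rcases hwS with rfl | rfl | rfl
        · rcases L1 hn hm hl hadjw with h1 | h1
          · exact absurd ⟨d, hd, by rw [← h1]; exact Sym2.other_mem hw, hw⟩ hU1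
          · exact Or.inl (by rw [← h1]; exact Sym2.other_mem hw)
        · exact Or.inl hw
        · exact Or.inr hw
      have honly : ∀ e' ∈ M', ∀ w ∈ e', (w = n ∨ w = n+1 ∨ w = n+2) → e' = e := by
        intro e' he' w hw hwS
        by_contra hne
        rcases hshape e' he' w hw hwS with h1 | h1 <;>
          rcases hshape e heM v hve hvS with h2 | h2
        · exact hne (eq_of_mem_mem hM' he' heM h1 h2)
        · exact hM'.2 e' he' e heM hne _ h1 _ h2 (E'23 hn hm hl)
        · exact hM'.2 e' he' e heM hne _ h1 _ h2 (E'23 hn hm hl).symm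
        · exact hne (eq_of_mem_mem hM' he' heM h1 h2)
      have hkey : (n ∈ e) ∨ ((n+2:ℕ) ∈ e) := by
        rcases hvS with rfl | rfl | rfl
        · exact Or.inl hve
        · have hsp := Sym2.other_spec hve
          have hadj1 : (dumbbell n (l+3) m).Adj (n+1) (Sym2.Mem.other hve) :=
            (dumbbell n (l+3) m).mem_edgeSet.mp (by rw [hsp]; exact hM'.1 e heM)
          rcases L2 hn hm hl hadj1 with h1 | h1
          · exact Or.inl (by rw [← h1]; exact Sym2.other_mem hve)
          · exact Or.inr (by rw [← h1]; exact Sym2.other_mem hve)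
        · exact Or.inr hve
      set rest := M'.erase e with hrestdef
      have hrsub : rest ⊆ M' := Finset.erase_subset _ _
      have hrne : ∀ e' ∈ rest, e' ≠ e := fun e' he' => Finset.ne_of_mem_erase he'
      have havoid : ∀ e' ∈ rest, ∀ w ∈ e', ¬(w = n ∨ w = n+1 ∨ w = n+2) :=
        fun e' he' w hw hS => hrne e' he' (honly e' (hrsub he') w hw hS)
      obtain ⟨hpull, hpcard⟩ := pullback hn hm hl (subset_matching hM' hrsub) havoid
        (by
          rintro ⟨⟨d0, hd0, h00⟩, ⟨d3, hd3, h33⟩⟩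
          rcases hkey with hke | hke
          · exact hM'.2 d0 (hrsub hd0) e heM (hrne d0 hd0) 0 h00 n hke (E'01 hn hm hl)
          · exact hM'.2 d3 (hrsub hd3) e heM (hrne d3 hd3) _ h33 _ hke (E'34 hn hm hl).symm)
        (by
          rintro ⟨hl1, ⟨d0, hd0, h00⟩, ⟨dm, hdm, hmm⟩⟩
          rcases hkey with hke | hke
          · exact hM'.2 d0 (hrsub hd0) e heM (hrne d0 hd0) 0 h00 n hke (E'01 hn hm hl)
          · exact hM'.2 dm (hrsub hdm) e heM (hrne dm hdm) _ hmm _ hke (E'5 hn hm hl1).symm)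
      have hcard1 : 1 ≤ M'.card := Finset.card_pos.mpr ⟨e, heM⟩
      refine ⟨_, hpull, ?_⟩
      rw [hpcard, hrestdef, Finset.card_erase_of_mem heM]
      omega
    · -- U-b-ii/iii : no edge touches {n, n+1, n+2}
      have havoidM : ∀ e' ∈ M', ∀ w ∈ e', ¬(w = n ∨ w = n+1 ∨ w = n+2) :=
        fun e' he' w hw hS => hT ⟨e', he', w, hw, hS⟩
      by_cases hbad : (∃ e ∈ M', (0:ℕ) ∈ e) ∧
          ((∃ e ∈ M', (n+3:ℕ) ∈ e) ∨ (l = 1 ∧ ∃ e ∈ M', (n+m+1:ℕ) ∈ e))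
      · obtain ⟨⟨e0, he0, h00⟩, -⟩ := hbad
        set rest := M'.erase e0 with hrestdef
        have hrsub : rest ⊆ M' := Finset.erase_subset _ _
        have hrne : ∀ e' ∈ rest, e' ≠ e0 := fun e' he' => Finset.ne_of_mem_erase he'
        have hb0 : ∀ e' ∈ rest, (0:ℕ) ∉ e' :=
          fun e' he' h0 => hrne e' he' (eq_of_mem_mem hM' (hrsub he') he0 h0 h00)
        obtain ⟨hpull, hpcard⟩ := pullback hn hm hl (subset_matching hM' hrsub)
          (fun e' he' w hw hS => havoidM e' (hrsub he') w hw hS)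
          (by rintro ⟨⟨e', he', h0'⟩, -⟩; exact hb0 e' he' h0')
          (by rintro ⟨-, ⟨e', he', h0'⟩, -⟩; exact hb0 e' he' h0')
        have hcard1 : 1 ≤ M'.card := Finset.card_pos.mpr ⟨e0, he0⟩
        refine ⟨_, hpull, ?_⟩
        rw [hpcard, hrestdef, Finset.card_erase_of_mem he0]
        omega
      · obtain ⟨hpull, hpcard⟩ := pullback hn hm hl hM' havoidM
          (by rintro ⟨c0, c3⟩; exact hbad ⟨c0, Or.inl c3⟩)
          (by rintro ⟨hl1, c0, cm⟩; exact hbad ⟨c0, Or.inr ⟨hl1, cm⟩⟩)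
        exact ⟨_, hpull, by rw [hpcard]; omega⟩

end upper
end DB


/-- For `n, m ≥ 3` and `l ≥ 1`, `ν(C_n · P_{l+3} · C_m) = ν(C_n · P_l · C_m) + 1`. -/
theorem inducedMatchingNumber_dumbbell_add_three (n m l : ℕ)
    (hn : 3 ≤ n) (hm : 3 ≤ m) (hl : 1 ≤ l) :
    (dumbbell n (l + 3) m).inducedMatchingNumber =
      (dumbbell n l m).inducedMatchingNumber + 1 :=
  le_antisymm (DB.upper hn hm hl) (DB.lower hn hm hl)
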